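/- Let (R, m) be a noetherian local ring and M an R-module such that every element of M is annihilated by a power of m. Then M carries a natural structure of a module over the m-adic completion R̂ of R, and if M is injective as an R̂-module then M is injective as an R-module. -/

import Mathlib

section Aux

open TensorProduct

variable {R : Type} [CommRing R] (I : Ideal R)
variable {M : Type} [AddCommGroup M] [Module R M]

/-- `x` is killed by `I ^ n`. -/
def AuxKills (n : ℕ) (x : M) : Prop := ∀ a ∈ I ^ n, a • x = 0

lemma auxKills_mono {n m : ℕ} (h : n ≤ m) {x : M} (hk : AuxKills I n x) : AuxKills I m x :=
  fun a ha => hk a (Ideal.pow_le_pow_right h ha)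

lemma aux_smul_top_eq (n : ℕ) : (I ^ n • ⊤ : Submodule R R) = I ^ n := by
  rw [smul_eq_mul, Ideal.mul_top]

lemma aux_welldef (r : AdicCompletion I R) {x : M} {n m : ℕ}
    (hn : AuxKills I n x) (hm : AuxKills I m x) {a b : R}
    (ha : Submodule.Quotient.mk a = r.val n)
    (hb : Submodule.Quotient.mk b = r.val m) : a • x = b • x := by
  obtain ⟨c, hc⟩ := Submodule.Quotient.mk_surjective _ (r.val (max n m))
  have key : ∀ (k : ℕ) (hk : k ≤ max n m) (d : R), AuxKills I k x →
      Submodule.Quotient.mk d = r.val k → c • x = d • x := by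
    intro k hk d hkill hd
    have h1 : (Submodule.Quotient.mk c : R ⧸ (I ^ k • ⊤ : Submodule R R)) = r.val k := by
      rw [← r.property hk, ← hc]; rfl
    have h2 : c - d ∈ (I ^ k • ⊤ : Submodule R R) :=
      (Submodule.Quotient.eq _).mp (h1.trans hd.symm)
    rw [aux_smul_top_eq] at h2
    have := hkill _ h2
    rwa [sub_smul, sub_eq_zero] at this
  rw [← key n (le_max_left n m) a hn ha, key m (le_max_right n m) b hm hb]

/-- The scalar multiplication of the adic completion on an `I`-power torsion module. -/
noncomputable def auxSMul (htor : ∀ x : M, ∃ n : ℕ, AuxKills I n x)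
    (r : AdicCompletion I R) (x : M) : M :=
  (Submodule.Quotient.mk_surjective _ (r.val (htor x).choose)).choose • x

lemma auxSMul_def (htor : ∀ x : M, ∃ n : ℕ, AuxKills I n x)
    (r : AdicCompletion I R) {x : M} {n : ℕ} (hn : AuxKills I n x) {a : R}
    (ha : Submodule.Quotient.mk a = r.val n) : auxSMul I htor r x = a • x :=
  aux_welldef I r (htor x).choose_spec hn
    (Submodule.Quotient.mk_surjective _ (r.val (htor x).choose)).choose_spec ha

lemma aux_val_algebraMap (r : R) (n : ℕ) :
    (algebraMap R (AdicCompletion I R) r).val n = Submodule.Quotient.mk r := rfl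

/-- The module structure of the adic completion on an `I`-power torsion module. -/
noncomputable def auxModule (htor : ∀ x : M, ∃ n : ℕ, AuxKills I n x) :
    Module (AdicCompletion I R) M :=
  letI : SMul (AdicCompletion I R) M := ⟨auxSMul I htor⟩
  have hdef : ∀ (r : AdicCompletion I R) {x : M} {n : ℕ}, AuxKills I n x → ∀ {a : R},
      Submodule.Quotient.mk a = r.val n → r • x = a • x := by
    intro r x n hn a ha; exact auxSMul_def I htor r hn ha
  Module.ofMinimalAxioms
    (fun r x y => by
      obtain ⟨n, hn⟩ := htor x
      obtain ⟨m, hm⟩ := htor y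
      obtain ⟨a, ha⟩ := Submodule.Quotient.mk_surjective _ (r.val (max n m))
      have hx := auxKills_mono I (le_max_left n m) hn
      have hy := auxKills_mono I (le_max_right n m) hm
      have hxy : AuxKills I (max n m) (x + y) := fun c hc => by
        rw [smul_add, hx c hc, hy c hc, add_zero]
      rw [hdef r hxy ha, hdef r hx ha, hdef r hy ha, smul_add])
    (fun r s x => by
      obtain ⟨n, hn⟩ := htor x
      obtain ⟨a, ha⟩ := Submodule.Quotient.mk_surjective _ (r.val n)
      obtain ⟨b, hb⟩ := Submodule.Quotient.mk_surjective _ (s.val n)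
      have hab : (Submodule.Quotient.mk (a + b) : R ⧸ (I ^ n • ⊤ : Submodule R R))
          = (r + s).val n := by
        rw [Submodule.Quotient.mk_add, ha, hb]; rfl
      rw [hdef (r + s) hn hab, hdef r hn ha, hdef s hn hb, add_smul])
    (fun r s x => by
      obtain ⟨n, hn⟩ := htor x
      obtain ⟨a, ha⟩ := Submodule.Quotient.mk_surjective _ (r.val n)
      obtain ⟨b, hb⟩ := Submodule.Quotient.mk_surjective _ (s.val n)
      have hsx : s • x = b • x := hdef s hn hb
      have hbx : AuxKills I n (b • x) := fun c hc => by
        rw [smul_comm, hn c hc, smul_zero]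
      have hab : (Submodule.Quotient.mk (a * b) : R ⧸ (I ^ n • ⊤ : Submodule R R))
          = (r * s).val n := by
        have : (Submodule.Quotient.mk (a * b) : R ⧸ (I ^ n • ⊤ : Ideal R))
            = Ideal.Quotient.mk _ a * Ideal.Quotient.mk _ b := rfl
        rw [this]
        show _ = r.val n * s.val n
        rw [← ha, ← hb]; rfl
      rw [hdef (r * s) hn hab, hsx, hdef r hbx ha, mul_smul])
    (fun x => by
      obtain ⟨n, hn⟩ := htor x
      have h1 : (Submodule.Quotient.mk (1 : R) : R ⧸ (I ^ n • ⊤ : Submodule R R))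
          = (1 : AdicCompletion I R).val n := rfl
      rw [hdef 1 hn h1, one_smul])

lemma auxModule_compat (htor : ∀ x : M, ∃ n : ℕ, AuxKills I n x) (r : R) (x : M) :
    letI := auxModule I htor
    (algebraMap R (AdicCompletion I R) r) • x = r • x := by
  letI := auxModule I htor
  obtain ⟨n, hn⟩ := htor x
  exact auxSMul_def I htor _ hn (aux_val_algebraMap I r n)

end Aux

set_option synthInstance.maxHeartbeats 1000000 in
/-- Let `(R, m)` be a noetherian local ring and `M` an `R`-module every element of which is
annihilated by a power of `m`. Then `M` carries a natural module structure over the `m`-adic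
completion `R̂` (compatible with the `R`-structure via `R → R̂`), and if `M` is injective over
`R̂` then it is injective over `R`. -/
theorem stmt_16 (R : Type) [CommRing R] [IsNoetherianRing R] [IsLocalRing R]
    (M : Type) [AddCommGroup M] [Module R M]
    (htor : ∀ x : M, ∃ n : ℕ, ∀ a ∈ (IsLocalRing.maximalIdeal R) ^ n, a • x = 0) :
    ∃ inst : Module (AdicCompletion (IsLocalRing.maximalIdeal R) R) M,
      (∀ (r : R) (x : M),
        letI := inst
        (algebraMap R (AdicCompletion (IsLocalRing.maximalIdeal R) R) r) • x = r • x) ∧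
      ((letI := inst;
        Module.Injective (AdicCompletion (IsLocalRing.maximalIdeal R) R) M) →
        Module.Injective R M) := by
  set I := IsLocalRing.maximalIdeal R with hI
  letI inst := auxModule I htor
  have compat := auxModule_compat I htor
  refine ⟨inst, compat, fun hinj => ?_⟩
  haveI : IsScalarTower R (AdicCompletion I R) M := IsScalarTower.of_algebraMap_smul compat
  haveI : Module.Injective (AdicCompletion I R) M := hinj
  set Rh := AdicCompletion I R with hRh
  haveI hflat : Module.Flat R Rh := inferInstance
  refine Module.Baer.injective (fun J g => ?_)
  have hinj' : Function.Injective (J.subtype.lTensor Rh) :=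
    (Module.Flat.iff_lTensor_injective' (R := R) (M := Rh)).mp hflat J
  let ι : TensorProduct R Rh J →ₗ[Rh] Rh :=
    ((Algebra.linearMap R Rh).comp J.subtype).liftBaseChange Rh
  have hι : Function.Injective ι := by
    have key : ∀ z, ι z = TensorProduct.rid R Rh (J.subtype.lTensor Rh z) := by
      intro z
      induction z using TensorProduct.induction_on with
      | zero => simp
      | tmul s a =>
        simp [ι, TensorProduct.rid_tmul, Algebra.smul_def, mul_comm]
      | add u v hu hv => simp [map_add, hu, hv]
    intro z w h
    apply hinj'
    apply (TensorProduct.rid R Rh).injective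
    rw [← key, ← key, h]
  let G : TensorProduct R Rh J →ₗ[Rh] M := g.liftBaseChange Rh
  obtain ⟨h, hh⟩ := Module.Injective.extension_property Rh M _ _ ι hι G
  refine ⟨(h.restrictScalars R).comp (Algebra.linearMap R Rh), fun x hx => ?_⟩
  have hx1 : ι ((1 : Rh) ⊗ₜ[R] (⟨x, hx⟩ : J)) = algebraMap R Rh x := by
    simp [ι]
  have := LinearMap.congr_fun hh ((1 : Rh) ⊗ₜ[R] (⟨x, hx⟩ : J))
  simp only [LinearMap.comp_apply] at this ⊢
  rw [Algebra.linearMap_apply, LinearMap.restrictScalars_apply, ← hx1, this]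
  simp [G]
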